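/- Let ε be a standard Gaussian vector in ℝⁿ and δ ∈ (0,1). Then P(‖ε‖² ≤ n(1-δ)) ≤ exp(-nδ²/4). -/

import Mathlib

open MeasureTheory ProbabilityTheory Real
open scoped ENNReal NNReal

lemma aux_log_ineq {x : ℝ} (hx : 0 ≤ x) : x - x ^ 2 / 2 ≤ Real.log (1 + x) := by
  set f : ℝ → ℝ := fun y => Real.log (1 + y) - y + y ^ 2 / 2 with hf
  have hderiv : ∀ y ∈ Set.Ici (0 : ℝ), HasDerivAt f (y ^ 2 / (1 + y)) y := by
    intro y hy
    have hy0 : (0 : ℝ) ≤ y := hy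
    have h1y : (0 : ℝ) < 1 + y := by linarith
    have h1 : HasDerivAt (fun y : ℝ => 1 + y) 1 y := (hasDerivAt_id y).const_add 1
    have h2 : HasDerivAt (fun y : ℝ => Real.log (1 + y)) (1 / (1 + y)) y :=
      h1.log h1y.ne'
    have h3 : HasDerivAt (fun y : ℝ => y ^ 2 / 2) ((2 * y ^ 1) / 2) y :=
      (hasDerivAt_pow 2 y).div_const 2
    have h4 := (h2.sub (hasDerivAt_id y)).add h3
    convert h4 using 1
    · rfl
    · rfl
    · rfl
    field_simp
    ring
  have hcont : ContinuousOn f (Set.Ici 0) := fun y hy =>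
    (hderiv y hy).continuousAt.continuousWithinAt
  have hmono : MonotoneOn f (Set.Ici 0) := by
    refine monotoneOn_of_deriv_nonneg (convex_Ici 0) hcont ?_ ?_
    · intro y hy
      rw [interior_Ici] at hy
      exact (hderiv y (Set.mem_Ici.mpr (le_of_lt hy))).differentiableAt.differentiableWithinAt
    · intro y hy
      rw [interior_Ici] at hy
      rw [(hderiv y (Set.mem_Ici.mpr (le_of_lt hy))).deriv]
      have : (0 : ℝ) < 1 + y := by
        have : (0:ℝ) < y := hy
        linarith
      positivity
  have h0 : f 0 ≤ f x := hmono (Set.self_mem_Ici) hx hx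
  simp only [hf] at h0
  norm_num at h0
  linarith

lemma aux_gauss_int {s : ℝ} (hs : 0 < s) :
    ∫ x, Real.exp (-s * x ^ 2) ∂(gaussianReal 0 1) = Real.sqrt (1 / (1 + 2 * s)) := by
  rw [gaussianReal_of_var_ne_zero _ one_ne_zero]
  have hmeas : Measurable fun x => (gaussianPDFReal 0 1 x).toNNReal :=
    (measurable_gaussianPDFReal 0 1).real_toNNReal
  have hpdf : gaussianPDF 0 1 = fun x => ((gaussianPDFReal 0 1 x).toNNReal : ℝ≥0∞) := rfl
  rw [hpdf, integral_withDensity_eq_integral_smul hmeas]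
  have hcoe : ∀ x : ℝ, ((gaussianPDFReal 0 1 x).toNNReal : ℝ) = gaussianPDFReal 0 1 x :=
    fun x => Real.coe_toNNReal _ (gaussianPDFReal_nonneg _ _ _)
  simp_rw [NNReal.smul_def, smul_eq_mul, hcoe, gaussianPDFReal]
  have hπ : (0 : ℝ) < π := Real.pi_pos
  have key : ∀ x : ℝ,
      (Real.sqrt (2 * π * (1 : ℝ≥0)))⁻¹ * Real.exp (-(x - 0) ^ 2 / (2 * (1 : ℝ≥0)))
        * Real.exp (-s * x ^ 2)
      = (Real.sqrt (2 * π))⁻¹ * Real.exp (-(s + 1 / 2) * x ^ 2) := by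
    intro x
    rw [mul_assoc, ← Real.exp_add]
    have h1 : (2 * π * ((1 : ℝ≥0) : ℝ)) = 2 * π := by norm_num
    rw [h1]
    congr 2
    push_cast
    ring
  simp_rw [key]
  rw [integral_const_mul, integral_gaussian]
  rw [← Real.sqrt_inv, ← Real.sqrt_mul (by positivity)]
  congr 1
  field_simp
  ring

/-- Laurent–Massart lower deviation.
Let `ε` be a standard Gaussian vector in `ℝⁿ` (i.e. its coordinates are i.i.d. standard
Gaussian random variables) and `δ ∈ (0,1)`.  Then
`P(‖ε‖² ≤ n(1-δ)) ≤ exp(-nδ²/4)`. -/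
theorem stmt_15
    {Ω : Type*} [MeasureSpace Ω] [IsProbabilityMeasure (ℙ : Measure Ω)]
    (n : ℕ) (δ : ℝ) (hδ0 : 0 < δ) (hδ1 : δ < 1)
    (ε : Ω → Fin n → ℝ)
    (hmeas : ∀ i, Measurable fun ω => ε ω i)
    (hindep : iIndepFun (fun i ω => ε ω i) ℙ)
    (hlaw : ∀ i, Measure.map (fun ω => ε ω i) ℙ = gaussianReal 0 1) :
    (ℙ {ω | ∑ i, (ε ω i) ^ 2 ≤ n * (1 - δ)}).toReal ≤ exp (-(n : ℝ) * δ ^ 2 / 4) := by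
  have hs : (0 : ℝ) < δ / 2 := by linarith
  set X : Fin n → Ω → ℝ := fun i ω => ε ω i ^ 2 with hX
  have hXmeas : ∀ i, Measurable (X i) := fun i => (hmeas i).pow_const 2
  have hindep2 : iIndepFun X ℙ :=
    hindep.comp (fun _ x => x ^ 2) (fun _ => measurable_id.pow_const 2)
  have hmgf_i : ∀ i, mgf (X i) ℙ (-(δ / 2)) = Real.sqrt (1 / (1 + δ)) := by
    intro i
    have h1 : ∫ x, Real.exp (-(δ / 2) * x ^ 2) ∂(Measure.map (fun ω => ε ω i) ℙ)
        = ∫ ω, Real.exp (-(δ / 2) * (ε ω i) ^ 2) ∂ℙ :=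
      integral_map (hmeas i).aemeasurable (Measurable.aestronglyMeasurable (by fun_prop))
    rw [hlaw i, aux_gauss_int hs] at h1
    rw [mgf]
    simp only [hX]
    rw [← h1]
    congr 1
    ring
  have hsum_nonneg : ∀ ω, 0 ≤ (∑ i, X i) ω := by
    intro ω
    rw [Finset.sum_apply]
    exact Finset.sum_nonneg fun i _ => sq_nonneg _
  have hint : Integrable (fun ω => Real.exp (-(δ / 2) * (∑ i, X i) ω)) ℙ := by
    refine Integrable.mono' (integrable_const 1) ?_ (ae_of_all _ fun ω => ?_)
    · refine (measurable_const.mul ?_).exp.aestronglyMeasurable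
      have hm : Measurable fun ω => ∑ i, X i ω := Finset.measurable_sum _ fun i _ => hXmeas i
      rw [show (∑ i, X i) = fun ω => ∑ i, X i ω from funext fun ω => Finset.sum_apply _ _ _]
      exact hm
    · rw [Real.norm_eq_abs, abs_of_pos (Real.exp_pos _)]
      rw [Real.exp_le_one_iff]
      exact mul_nonpos_of_nonpos_of_nonneg (by linarith) (hsum_nonneg ω)
  have hcher := measure_le_le_exp_mul_mgf (μ := ℙ) (X := ∑ i, X i)
    ((n : ℝ) * (1 - δ)) (t := -(δ / 2)) (by linarith) hint
  rw [hindep2.mgf_sum hXmeas Finset.univ] at hcher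
  simp only [hmgf_i, Finset.prod_const, Finset.card_univ, Fintype.card_fin] at hcher
  have hset : {ω | (∑ i, X i) ω ≤ (n : ℝ) * (1 - δ)}
      = {ω | ∑ i, (ε ω i) ^ 2 ≤ (n : ℝ) * (1 - δ)} := by
    ext ω
    simp [Finset.sum_apply, hX]
  rw [hset] at hcher
  refine hcher.trans ?_
  have h1δ : (0 : ℝ) < 1 + δ := by linarith
  have hL : δ - δ ^ 2 / 2 ≤ Real.log (1 + δ) := aux_log_ineq hδ0.le
  have hsqrt : Real.sqrt (1 / (1 + δ)) ^ n = Real.exp ((n : ℝ) * (-Real.log (1 + δ)) / 2) := by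
    have hpos : (0 : ℝ) < Real.sqrt (1 / (1 + δ)) := Real.sqrt_pos.mpr (by positivity)
    rw [← Real.exp_log hpos, ← Real.exp_nat_mul]
    congr 1
    rw [Real.log_sqrt (by positivity), one_div, Real.log_inv]
    ring
  rw [hsqrt, ← Real.exp_add]
  rw [Real.exp_le_exp]
  have hn : (0 : ℝ) ≤ (n : ℝ) := Nat.cast_nonneg n
  have key : (n : ℝ) * (Real.log (1 + δ) - (δ - δ ^ 2 / 2)) ≥ 0 :=
    mul_nonneg hn (by linarith)
  nlinarith [key]
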